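/- Let u ≥ 0 be a real number with 2u < 1, and set γ₂ := 2u/(1−2u). Let α, β and c_a, c_b, c_d, ĉ_a, ĉ_b, ĉ_d, ĉ be real numbers, with errors e_a := ĉ_a − c_a, e_b := ĉ_b − c_b, e_d := ĉ_d − c_d. Suppose the exact recursion c = c_a − α·c_b − β²·c_d holds, and the computed value satisfies (1+ε)·ĉ = ĉ_a·(1+δ) − α·ĉ_b·(1+θ₂) − β²·ĉ_d·(1+θ₂′) for some real δ, ε, θ₂, θ₂′ with |δ| ≤ u, |ε| ≤ u, |θ₂| ≤ γ₂, |θ₂′| ≤ γ₂. Then the error e := ĉ − c satisfies |e| ≤ |e_a| + |α·e_b| + |β²·e_d| + u·(|ĉ_a| + |ĉ|) + γ₂·(|α·ĉ_b| + |β²·ĉ_d|). -/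

import Mathlib

/-- Theorem 4.4 (case 3 ≤ j < i) of the paper: error bound for
`ĉⱼ⁽ⁱ⁾ = fl[fl[ĉⱼ⁽ⁱ⁻¹⁾ − fl[αᵢ ĉⱼ₋₁⁽ⁱ⁻¹⁾]] − fl[βᵢ² ĉⱼ₋₂⁽ⁱ⁻²⁾]]`. -/
theorem stmt_6 (u : ℝ) (hu : 0 ≤ u) (h2u : 2 * u < 1)
    (α β ca cb cd cahat cbhat cdhat chat c δ ε θ₂ θ₂' : ℝ)
    (hδ : |δ| ≤ u) (hε : |ε| ≤ u)
    (hθ : |θ₂| ≤ 2 * u / (1 - 2 * u)) (hθ' : |θ₂'| ≤ 2 * u / (1 - 2 * u))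
    (hexact : c = ca - α * cb - β ^ 2 * cd)
    (hcomp : (1 + ε) * chat =
      cahat * (1 + δ) - α * cbhat * (1 + θ₂) - β ^ 2 * cdhat * (1 + θ₂')) :
    |chat - c| ≤ |cahat - ca| + |α * (cbhat - cb)| + |β ^ 2 * (cdhat - cd)|
      + u * (|cahat| + |chat|)
      + (2 * u / (1 - 2 * u)) * (|α * cbhat| + |β ^ 2 * cdhat|) := by
  have key : chat - c = (cahat - ca) - α * (cbhat - cb) - β ^ 2 * (cdhat - cd)
      + δ * cahat - θ₂ * (α * cbhat) - θ₂' * (β ^ 2 * cdhat) - ε * chat := by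
    rw [hexact]; nlinarith [hcomp]
  rw [key]
  have h1 : |δ * cahat| ≤ u * |cahat| := by
    rw [abs_mul]; exact mul_le_mul_of_nonneg_right hδ (abs_nonneg _)
  have h2 : |ε * chat| ≤ u * |chat| := by
    rw [abs_mul]; exact mul_le_mul_of_nonneg_right hε (abs_nonneg _)
  have h3 : |θ₂ * (α * cbhat)| ≤ (2 * u / (1 - 2 * u)) * |α * cbhat| := by
    rw [abs_mul]; exact mul_le_mul_of_nonneg_right hθ (abs_nonneg _)
  have h4 : |θ₂' * (β ^ 2 * cdhat)| ≤ (2 * u / (1 - 2 * u)) * |β ^ 2 * cdhat| := by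
    rw [abs_mul]; exact mul_le_mul_of_nonneg_right hθ' (abs_nonneg _)
  calc |(cahat - ca) - α * (cbhat - cb) - β ^ 2 * (cdhat - cd)
      + δ * cahat - θ₂ * (α * cbhat) - θ₂' * (β ^ 2 * cdhat) - ε * chat|
      ≤ |cahat - ca| + |α * (cbhat - cb)| + |β ^ 2 * (cdhat - cd)|
        + |δ * cahat| + |θ₂ * (α * cbhat)| + |θ₂' * (β ^ 2 * cdhat)| + |ε * chat| := by
        calc _ ≤ |(cahat - ca) - α * (cbhat - cb) - β ^ 2 * (cdhat - cd)
            + δ * cahat - θ₂ * (α * cbhat) - θ₂' * (β ^ 2 * cdhat)| + |ε * chat| :=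
              abs_sub _ _
          _ ≤ _ := by
            gcongr
            calc _ ≤ |(cahat - ca) - α * (cbhat - cb) - β ^ 2 * (cdhat - cd)
                + δ * cahat - θ₂ * (α * cbhat)| + |θ₂' * (β ^ 2 * cdhat)| := abs_sub _ _
              _ ≤ _ := by
                gcongr
                calc _ ≤ |(cahat - ca) - α * (cbhat - cb) - β ^ 2 * (cdhat - cd)
                    + δ * cahat| + |θ₂ * (α * cbhat)| := abs_sub _ _
                  _ ≤ _ := by
                    gcongr
                    calc _ ≤ |(cahat - ca) - α * (cbhat - cb) - β ^ 2 * (cdhat - cd)|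
                        + |δ * cahat| := abs_add_le _ _
                      _ ≤ _ := by
                        gcongr
                        calc _ ≤ |(cahat - ca) - α * (cbhat - cb)| + |β ^ 2 * (cdhat - cd)| :=
                            abs_sub _ _
                          _ ≤ _ := by gcongr; exact abs_sub _ _
    _ ≤ _ := by nlinarith [h1, h2, h3, h4]
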